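/- Let (X,Y) be a random vector, Y' a conditionally independent copy of Y given X, ε_n a sequence of real random variables with ε_n → 0 in distribution and ε_n independent of (X,Y) for every n. Set Y_n := Y + ε_n and let Y_n' be a conditionally independent copy of Y_n given X. Then (Y_n, Y_n') converges in distribution to (Y, Y'). -/

import Mathlib

open MeasureTheory ProbabilityTheory

variable {Ω : Type*} [mΩ : MeasurableSpace Ω] [StandardBorelSpace Ω] [Nonempty Ω]

/-- `Y'` is a conditionally independent copy of `Y` given `X`:
`Y ⊥ Y' | X` and the conditional distributions of `Y` and `Y'` given `X` coincide. -/
def IsCondIndepCopy {α : Type*} [mα : MeasurableSpace α]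
    (μ : Measure Ω) [IsFiniteMeasure μ] (X : Ω → α) (hX : Measurable X)
    (Y Y' : Ω → ℝ) : Prop :=
  CondIndepFun (mα.comap X) hX.comap_le Y Y' μ ∧
  ∀ s : Set ℝ, MeasurableSet s →
    μ[(Y ⁻¹' s).indicator (fun _ => (1:ℝ)) | mα.comap X] =ᵐ[μ]
      μ[(Y' ⁻¹' s).indicator (fun _ => (1:ℝ)) | mα.comap X]


open Filter
open scoped ENNReal

section Aux

variable {p : ℕ} {μ : Measure Ω} [IsProbabilityMeasure μ] {X : Ω → (Fin p → ℝ)}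

/-- Rectangle value of the "Markov product" measure. -/
lemma bind_prod_rect (hX : Measurable X) (K : Kernel (Fin p → ℝ) ℝ) [IsMarkovKernel K]
    {s t : Set ℝ} (hs : MeasurableSet s) (ht : MeasurableSet t) :
    ((μ.map X).bind ⇑(K ×ₖ K)) (s ×ˢ t) = ∫⁻ x, K x s * K x t ∂(μ.map X) := by
  rw [Measure.bind_apply (hs.prod ht) (Kernel.measurable _).aemeasurable]
  refine lintegral_congr fun x => ?_
  rw [Kernel.prod_apply, Measure.prod_prod]

/-- The law of a conditionally independent copy pair is the Markov product. -/
lemma map_pair_eq_bind (hX : Measurable X) {W W' : Ω → ℝ}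
    (hW : Measurable W) (hW' : Measurable W')
    (h : IsCondIndepCopy μ X hX W W') :
    μ.map (fun ω => (W ω, W' ω)) =
      (μ.map X).bind ⇑(condDistrib W X μ ×ₖ condDistrib W X μ) := by
  set κ := condDistrib W X μ with hκdef
  haveI : IsProbabilityMeasure (μ.map fun ω => (W ω, W' ω)) :=
    Measure.isProbabilityMeasure_map (hW.prodMk hW').aemeasurable
  haveI : IsProbabilityMeasure (μ.map X) := Measure.isProbabilityMeasure_map hX.aemeasurable
  have hbind_univ : ((μ.map X).bind ⇑(κ ×ₖ κ)) Set.univ = 1 := by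
    rw [Measure.bind_apply MeasurableSet.univ (Kernel.measurable _).aemeasurable]
    simp [measure_univ]
  refine ext_of_generate_finite _ generateFrom_prod.symm isPiSystem_prod ?_
    (by simp [measure_univ, hbind_univ])
  rintro u ⟨s, hs, t, ht, rfl⟩
  simp only [Set.mem_setOf_eq] at hs ht
  rw [Measure.map_apply (hW.prodMk hW') (hs.prod ht), Set.mk_preimage_prod,
    bind_prod_rect hX κ hs ht]
  have hmeas : Measurable fun x => κ x s * κ x t :=
    (Kernel.measurable_coe κ hs).mul (Kernel.measurable_coe κ ht)
  have hle : ∀ x, κ x s * κ x t ≤ 1 := fun x => mul_le_one' prob_le_one prob_le_one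
  have hfin1 : μ (W ⁻¹' s ∩ W' ⁻¹' t) ≠ ⊤ := measure_ne_top _ _
  have hfin2 : ∫⁻ x, κ x s * κ x t ∂(μ.map X) ≠ ⊤ := by
    refine ne_of_lt (lt_of_le_of_lt (lintegral_mono hle) ?_)
    simp [lintegral_one, measure_univ]
  rw [← ENNReal.toReal_eq_toReal_iff' hfin1 hfin2]
  have h1 : (μ (W ⁻¹' s ∩ W' ⁻¹' t)).toReal
      = ∫ a, (κ (X a) s).toReal * (κ (X a) t).toReal ∂μ := by
    have hA : MeasurableSet (W ⁻¹' s ∩ W' ⁻¹' t) := (hW hs).inter (hW' ht)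
    have hint : Integrable ((W ⁻¹' s ∩ W' ⁻¹' t).indicator (fun _ => (1:ℝ))) μ :=
      (integrable_const 1).indicator hA
    have hi : (μ (W ⁻¹' s ∩ W' ⁻¹' t)).toReal
        = ∫ a, (W ⁻¹' s ∩ W' ⁻¹' t).indicator (fun _ => (1:ℝ)) a ∂μ := by
      rw [integral_indicator_const (1:ℝ) hA]; simp [Measure.real]
    rw [hi, ← integral_condExp hX.comap_le (f := (W ⁻¹' s ∩ W' ⁻¹' t).indicator (fun _ => (1:ℝ)))]
    refine integral_congr_ae ?_
    have e1 := (condIndepFun_iff_condExp_inter_preimage_eq_mul hW hW').mp h.1 s t hs ht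
    have e2 := h.2 t ht
    have e3 := condDistrib_ae_eq_condExp (μ := μ) hX hW hs
    have e4 := condDistrib_ae_eq_condExp (μ := μ) hX hW ht
    filter_upwards [e1, e2, e3, e4] with a ha1 ha2 ha3 ha4
    rw [ha1, ← measureReal_def, ← measureReal_def, ha3, ha4, ha2]
  have h2 : (∫⁻ x, κ x s * κ x t ∂(μ.map X)).toReal
      = ∫ a, (κ (X a) s).toReal * (κ (X a) t).toReal ∂μ := by
    rw [← integral_toReal hmeas.aemeasurable
        (ae_of_all _ fun x => lt_of_le_of_lt (hle x) ENNReal.one_lt_top),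
      integral_map hX.aemeasurable hmeas.ennreal_toReal.aestronglyMeasurable]
    simp_rw [ENNReal.toReal_mul]
  rw [h1, h2]

/-- Value of the convolution kernel. -/
lemma map_add_kernel_apply (κ : Kernel (Fin p → ℝ) ℝ) [IsSFiniteKernel κ]
    (ν : Measure ℝ) [SFinite ν] (x : Fin p → ℝ) {s : Set ℝ} (hs : MeasurableSet s) :
    Kernel.map (κ ×ₖ Kernel.const _ ν) (fun q : ℝ × ℝ => q.1 + q.2) x s
      = ∫⁻ y, ν {e | y + e ∈ s} ∂(κ x) := by
  have hadd : Measurable fun q : ℝ × ℝ => q.1 + q.2 := by fun_prop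
  rw [Kernel.map_apply' _ hadd _ hs, Kernel.prod_apply, Kernel.const_apply,
    Measure.prod_apply (hadd hs)]
  rfl

/-- The conditional distribution of `Y + ε` given `X`, when `ε` is independent of `(X, Y)`,
is the convolution of the conditional distribution of `Y` with the law of `ε`. -/
lemma condDistrib_add_ae (hX : Measurable X) {Y : Ω → ℝ} (hY : Measurable Y)
    {ε : Ω → ℝ} (hε : Measurable ε)
    (hind : IndepFun ε (fun ω => (X ω, Y ω)) μ) :
    ∀ᵐ x ∂(μ.map X),
      Kernel.map (condDistrib Y X μ ×ₖ Kernel.const _ (μ.map ε))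
          (fun q : ℝ × ℝ => q.1 + q.2) x
        = condDistrib (fun ω => Y ω + ε ω) X μ x := by
  set κ := condDistrib Y X μ with hκdef
  set ν := μ.map ε with hνdef
  haveI : IsProbabilityMeasure ν := Measure.isProbabilityMeasure_map hε.aemeasurable
  haveI : IsProbabilityMeasure (μ.map X) := Measure.isProbabilityMeasure_map hX.aemeasurable
  set cn := Kernel.map (κ ×ₖ Kernel.const _ ν) (fun q : ℝ × ℝ => q.1 + q.2) with hcndef
  haveI : IsMarkovKernel cn := Kernel.IsMarkovKernel.map _ (by fun_prop)
  refine (condDistrib_ae_eq_of_measure_eq_compProd (Y := fun ω => Y ω + ε ω) X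
    (hY.add hε).aemeasurable (κ := cn) ?_).mono fun x hx => hx.symm
  have hPXY : μ.map X ⊗ₘ κ = μ.map (fun ω => (X ω, Y ω)) := by
    rw [hκdef, condDistrib, ← Measure.fst_map_prodMk₀ (X := X) hY.aemeasurable,
      Measure.disintegrate]
  have hTXY : μ.map (fun ω => ((X ω, Y ω), ε ω)) = (μ.map fun ω => (X ω, Y ω)).prod ν :=
    (indepFun_iff_map_prod_eq_prod_map_map (hX.prodMk hY).aemeasurable hε.aemeasurable).mp
      hind.symm
  haveI : IsProbabilityMeasure (μ.map fun ω => (X ω, Y ω + ε ω)) :=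
    Measure.isProbabilityMeasure_map (hX.prodMk (hY.add hε)).aemeasurable
  have huniv : (μ.map X ⊗ₘ cn) Set.univ = 1 := by
    rw [Measure.compProd_apply MeasurableSet.univ]
    simp [measure_univ]
  refine ext_of_generate_finite _ generateFrom_prod.symm isPiSystem_prod ?_
    (by simp [measure_univ, huniv])
  rintro u ⟨t, ht, s, hs, rfl⟩
  simp only [Set.mem_setOf_eq] at hs ht
  have hgmeas : Measurable fun y : ℝ => ν {e | y + e ∈ s} := by
    have h1 : MeasurableSet {q : ℝ × ℝ | q.1 + q.2 ∈ s} :=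
      (by fun_prop : Measurable fun q : ℝ × ℝ => q.1 + q.2) hs
    exact measurable_measure_prodMk_left h1
  have hB : MeasurableSet {q : ((Fin p → ℝ) × ℝ) × ℝ | q.1.1 ∈ t ∧ q.1.2 + q.2 ∈ s} :=
    (measurable_fst.fst ht).inter ((measurable_fst.snd.add measurable_snd) hs)
  rw [Measure.map_apply (hX.prodMk (hY.add hε) : Measurable fun ω => (X ω, Y ω + ε ω)) (ht.prod hs)]
  have hpre : (fun ω => (X ω, Y ω + ε ω)) ⁻¹' (t ×ˢ s)
      = (fun ω => ((X ω, Y ω), ε ω)) ⁻¹'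
        {q : ((Fin p → ℝ) × ℝ) × ℝ | q.1.1 ∈ t ∧ q.1.2 + q.2 ∈ s} := rfl
  rw [hpre, ← Measure.map_apply ((hX.prodMk hY).prodMk hε) hB, hTXY,
    Measure.prod_apply hB]
  have hpt : ∀ q : (Fin p → ℝ) × ℝ,
      ν (Prod.mk q ⁻¹' {q : ((Fin p → ℝ) × ℝ) × ℝ | q.1.1 ∈ t ∧ q.1.2 + q.2 ∈ s})
        = t.indicator (fun _ => (1:ℝ≥0∞)) q.1 * ν {e | q.2 + e ∈ s} := by
    intro q
    by_cases hq : q.1 ∈ t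
    · have : Prod.mk q ⁻¹' {q : ((Fin p → ℝ) × ℝ) × ℝ | q.1.1 ∈ t ∧ q.1.2 + q.2 ∈ s}
          = {e | q.2 + e ∈ s} := by
        ext e; simp [hq]
      rw [this, Set.indicator_of_mem hq, one_mul]
    · have : Prod.mk q ⁻¹' {q : ((Fin p → ℝ) × ℝ) × ℝ | q.1.1 ∈ t ∧ q.1.2 + q.2 ∈ s}
          = (∅ : Set ℝ) := by
        ext e; simp [hq]
      rw [this, Set.indicator_of_notMem hq, zero_mul, measure_empty]
  simp_rw [hpt]
  have hfm : Measurable fun x : (Fin p → ℝ) × ℝ =>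
      t.indicator (fun _ => (1:ℝ≥0∞)) x.1 * ν {e | x.2 + e ∈ s} :=
    ((measurable_one.indicator ht).comp measurable_fst).mul (hgmeas.comp measurable_snd)
  rw [← hPXY, Measure.lintegral_compProd hfm, Measure.compProd_apply (ht.prod hs)]
  refine lintegral_congr fun x => ?_
  by_cases hx : x ∈ t
  · have hpre2 : Prod.mk x ⁻¹' (t ×ˢ s) = s := by ext e; simp [hx]
    simp only [Set.indicator_of_mem hx, one_mul, hpre2]
    rw [map_add_kernel_apply κ ν x hs]
  · have hpre2 : Prod.mk x ⁻¹' (t ×ˢ s) = (∅ : Set ℝ) := by ext e; simp [hx]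
    simp [Set.indicator_of_notMem hx, hpre2]

/-- The law of the perturbed Markov product is the original one convolved with the
product of noise laws. -/
lemma map_pair_add_eq (hX : Measurable X) {Y Y' : Ω → ℝ}
    (hY : Measurable Y) (hY' : Measurable Y')
    (hcopy : IsCondIndepCopy μ X hX Y Y')
    {ε : Ω → ℝ} (hε : Measurable ε)
    (hind : IndepFun ε (fun ω => (X ω, Y ω)) μ)
    {W' : Ω → ℝ} (hW' : Measurable W')
    (hcopyn : IsCondIndepCopy μ X hX (fun ω => Y ω + ε ω) W') :
    μ.map (fun ω => (Y ω + ε ω, W' ω)) =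
      ((μ.map fun ω => (Y ω, Y' ω)).prod ((μ.map ε).prod (μ.map ε))).map
        (fun q : (ℝ × ℝ) × (ℝ × ℝ) => (q.1.1 + q.2.1, q.1.2 + q.2.2)) := by
  set κ := condDistrib Y X μ with hκdef
  set κn := condDistrib (fun ω => Y ω + ε ω) X μ with hκndef
  set ν := μ.map ε with hνdef
  haveI : IsProbabilityMeasure ν := Measure.isProbabilityMeasure_map hε.aemeasurable
  haveI : IsProbabilityMeasure (μ.map X) := Measure.isProbabilityMeasure_map hX.aemeasurable
  haveI : IsProbabilityMeasure (μ.map fun ω => (Y ω, Y' ω)) :=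
    Measure.isProbabilityMeasure_map (hY.prodMk hY').aemeasurable
  haveI : IsProbabilityMeasure (μ.map fun ω => (Y ω + ε ω, W' ω)) :=
    Measure.isProbabilityMeasure_map ((hY.add hε).prodMk hW').aemeasurable
  have hT : Measurable fun q : (ℝ × ℝ) × (ℝ × ℝ) => (q.1.1 + q.2.1, q.1.2 + q.2.2) := by
    fun_prop
  haveI : IsProbabilityMeasure
      (((μ.map fun ω => (Y ω, Y' ω)).prod (ν.prod ν)).map
        (fun q : (ℝ × ℝ) × (ℝ × ℝ) => (q.1.1 + q.2.1, q.1.2 + q.2.2))) :=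
    Measure.isProbabilityMeasure_map hT.aemeasurable
  refine ext_of_generate_finite _ generateFrom_prod.symm isPiSystem_prod ?_
    (by simp [measure_univ])
  rintro u ⟨s, hs, t, ht, rfl⟩
  simp only [Set.mem_setOf_eq] at hs ht
  have hgs : Measurable fun y : ℝ => ν {e | y + e ∈ s} := by
    have h1 : MeasurableSet {q : ℝ × ℝ | q.1 + q.2 ∈ s} :=
      (by fun_prop : Measurable fun q : ℝ × ℝ => q.1 + q.2) hs
    exact measurable_measure_prodMk_left h1
  have hgt : Measurable fun y : ℝ => ν {e | y + e ∈ t} := by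
    have h1 : MeasurableSet {q : ℝ × ℝ | q.1 + q.2 ∈ t} :=
      (by fun_prop : Measurable fun q : ℝ × ℝ => q.1 + q.2) ht
    exact measurable_measure_prodMk_left h1
  -- LHS
  rw [map_pair_eq_bind (W := fun ω => Y ω + ε ω) hX (hY.add hε) hW' hcopyn, bind_prod_rect hX _ hs ht]
  -- RHS
  have hD : MeasurableSet ((fun q : (ℝ × ℝ) × (ℝ × ℝ) => (q.1.1 + q.2.1, q.1.2 + q.2.2)) ⁻¹'
      (s ×ˢ t)) := hT (hs.prod ht)
  rw [Measure.map_apply hT (hs.prod ht), Measure.prod_apply hD]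
  have hpt : ∀ a : ℝ × ℝ,
      (ν.prod ν) (Prod.mk a ⁻¹' ((fun q : (ℝ × ℝ) × (ℝ × ℝ) =>
          (q.1.1 + q.2.1, q.1.2 + q.2.2)) ⁻¹' (s ×ˢ t)))
        = ν {e | a.1 + e ∈ s} * ν {e | a.2 + e ∈ t} := by
    intro a
    have : Prod.mk a ⁻¹' ((fun q : (ℝ × ℝ) × (ℝ × ℝ) =>
        (q.1.1 + q.2.1, q.1.2 + q.2.2)) ⁻¹' (s ×ˢ t))
        = {e : ℝ | a.1 + e ∈ s} ×ˢ {e : ℝ | a.2 + e ∈ t} := rfl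
    rw [this, Measure.prod_prod]
  simp_rw [hpt]
  have hfm2 : Measurable fun a : ℝ × ℝ => ν {e | a.1 + e ∈ s} * ν {e | a.2 + e ∈ t} :=
    (hgs.comp measurable_fst).mul (hgt.comp measurable_snd)
  rw [map_pair_eq_bind hX hY hY' hcopy,
    Measure.lintegral_bind (Kernel.measurable _).aemeasurable hfm2.aemeasurable]
  refine lintegral_congr_ae ?_
  filter_upwards [condDistrib_add_ae hX hY hε hind] with x hx
  rw [← hx, map_add_kernel_apply κ ν x hs, map_add_kernel_apply κ ν x ht,
    Kernel.prod_apply, lintegral_prod_mul hgs.aemeasurable hgt.aemeasurable]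

end Aux

/-- Robustness of the Markov product against small perturbations of the response:
if `εₙ → 0` in distribution, `εₙ ⊥ (X,Y)`, and `(Yₙ, Yₙ')` is the Markov product of
`(X, Y + εₙ)`, then `(Yₙ, Yₙ')` converges in distribution to the Markov product
`(Y, Y')` of `(X, Y)`. -/
theorem markov_product_noise_resistance {p : ℕ}
    (μ : Measure Ω) [IsProbabilityMeasure μ]
    (X : Ω → (Fin p → ℝ)) (hX : Measurable X)
    (Y Y' : Ω → ℝ) (hY : Measurable Y) (hY' : Measurable Y')
    (hcopy : IsCondIndepCopy μ X hX Y Y')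
    (εn : ℕ → Ω → ℝ) (hεn : ∀ n, Measurable (εn n))
    (hindep : ∀ n, IndepFun (εn n) (fun ω => (X ω, Y ω)) μ)
    (hε0 : ∀ g : BoundedContinuousFunction ℝ ℝ,
      Tendsto (fun n => ∫ ω, g (εn n ω) ∂μ) atTop (nhds (g 0)))
    (Yn' : ℕ → Ω → ℝ) (hYn' : ∀ n, Measurable (Yn' n))
    (hcopyn : ∀ n, IsCondIndepCopy μ X hX (fun ω => Y ω + εn n ω) (Yn' n)) :
    ∀ f : BoundedContinuousFunction (ℝ × ℝ) ℝ,
      Tendsto (fun n => ∫ ω, f (Y ω + εn n ω, Yn' n ω) ∂μ) atTop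
        (nhds (∫ ω, f (Y ω, Y' ω) ∂μ)) := by
  intro f
  set P := μ.map (fun ω => (Y ω, Y' ω)) with hPdef
  set ν : ℕ → Measure ℝ := fun n => μ.map (εn n) with hνdef
  set ρ : ℕ → Measure (ℝ × ℝ) := fun n => (ν n).prod (ν n) with hρdef
  haveI : IsProbabilityMeasure P := Measure.isProbabilityMeasure_map (hY.prodMk hY').aemeasurable
  haveI : ∀ n, IsProbabilityMeasure (ν n) := fun n =>
    Measure.isProbabilityMeasure_map (hεn n).aemeasurable
  haveI : ∀ n, IsProbabilityMeasure (ρ n) := fun n => by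
    rw [hρdef]; infer_instance
  -- The function F
  have hFcont : Continuous fun b : ℝ × ℝ => ∫ a, f (a.1 + b.1, a.2 + b.2) ∂P := by
    rw [continuous_iff_continuousAt]
    intro b0
    refine tendsto_integral_filter_of_dominated_convergence (fun _ => ‖f‖) ?_ ?_
      (integrable_const _) ?_
    · exact Eventually.of_forall fun b =>
        (f.continuous.comp (by fun_prop : Continuous fun a : ℝ × ℝ =>
          (a.1 + b.1, a.2 + b.2))).measurable.aestronglyMeasurable
    · exact Eventually.of_forall fun b => ae_of_all _ fun a => f.norm_coe_le_norm _
    · refine ae_of_all _ fun a => ?_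
      exact ((f.continuous.comp (by fun_prop : Continuous fun b : ℝ × ℝ =>
        (a.1 + b.1, a.2 + b.2))).tendsto b0)
  have hFbd : ∀ b : ℝ × ℝ, ‖∫ a, f (a.1 + b.1, a.2 + b.2) ∂P‖ ≤ ‖f‖ := by
    intro b
    calc ‖∫ a, f (a.1 + b.1, a.2 + b.2) ∂P‖
        ≤ ‖f‖ * (P Set.univ).toReal :=
          norm_integral_le_of_norm_le_const (ae_of_all _ fun a => f.norm_coe_le_norm _)
      _ = ‖f‖ := by simp [measure_univ]
  set F : BoundedContinuousFunction (ℝ × ℝ) ℝ :=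
    BoundedContinuousFunction.ofNormedAddCommGroup
      (fun b => ∫ a, f (a.1 + b.1, a.2 + b.2) ∂P) hFcont ‖f‖ hFbd with hFdef
  have hFapp : ∀ b, F b = ∫ a, f (a.1 + b.1, a.2 + b.2) ∂P := fun b => rfl
  -- key identity
  have key : ∀ n, ∫ ω, f (Y ω + εn n ω, Yn' n ω) ∂μ = ∫ b, F b ∂(ρ n) := by
    intro n
    have hT : Measurable fun q : (ℝ × ℝ) × (ℝ × ℝ) => (q.1.1 + q.2.1, q.1.2 + q.2.2) := by
      fun_prop
    have hint : Integrable
        (fun q : (ℝ × ℝ) × (ℝ × ℝ) => f (q.1.1 + q.2.1, q.1.2 + q.2.2)) (P.prod (ρ n)) := by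
      refine (integrable_const ‖f‖).mono' ?_ (ae_of_all _ fun q => f.norm_coe_le_norm _)
      exact (f.continuous.comp (by fun_prop : Continuous fun q : (ℝ × ℝ) × (ℝ × ℝ) =>
        (q.1.1 + q.2.1, q.1.2 + q.2.2))).measurable.aestronglyMeasurable
    calc ∫ ω, f (Y ω + εn n ω, Yn' n ω) ∂μ
        = ∫ q, f q ∂(μ.map (fun ω => (Y ω + εn n ω, Yn' n ω))) :=
          (integral_map (by fun_prop) f.continuous.measurable.aestronglyMeasurable).symm
      _ = ∫ q, f q ∂((P.prod (ρ n)).map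
            (fun q : (ℝ × ℝ) × (ℝ × ℝ) => (q.1.1 + q.2.1, q.1.2 + q.2.2))) := by
          rw [map_pair_add_eq hX hY hY' hcopy (hεn n) (hindep n) (hYn' n) (hcopyn n)]
      _ = ∫ q, f (q.1.1 + q.2.1, q.1.2 + q.2.2) ∂(P.prod (ρ n)) :=
          integral_map hT.aemeasurable f.continuous.measurable.aestronglyMeasurable
      _ = ∫ b, ∫ a, f (a.1 + b.1, a.2 + b.2) ∂P ∂(ρ n) := integral_prod_symm _ hint
      _ = ∫ b, F b ∂(ρ n) := by simp_rw [hFapp]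
  have hF00 : F (0, 0) = ∫ ω, f (Y ω, Y' ω) ∂μ := by
    rw [hFapp]
    have : ∫ a, f (a.1 + (0:ℝ), a.2 + (0:ℝ)) ∂P = ∫ a, f a ∂P := by
      refine integral_congr_ae (ae_of_all _ fun a => ?_)
      simp
    rw [this, integral_map (by fun_prop) f.continuous.measurable.aestronglyMeasurable]
  have main : Tendsto (fun n => ∫ b, F b ∂(ρ n)) atTop (nhds (F (0, 0))) := by
    rw [Metric.tendsto_atTop]
    intro ε hεpos
    obtain ⟨δ, hδpos, hδ'⟩ : ∃ δ > 0, ∀ b : ℝ × ℝ, dist b (0, 0) < δ →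
        |F b - F (0, 0)| < ε / 4 := by
      obtain ⟨δ, hδpos, h⟩ := Metric.continuousAt_iff.mp
        (F.continuous.continuousAt (x := ((0:ℝ), (0:ℝ)))) (ε / 4) (by positivity)
      exact ⟨δ, hδpos, fun b hb => by simpa [Real.dist_eq] using h hb⟩
    -- cutoff function
    set g : BoundedContinuousFunction ℝ ℝ :=
      BoundedContinuousFunction.ofNormedAddCommGroup (fun e => min (|e| / δ) 1)
        (Continuous.min (continuous_abs.div_const δ) continuous_const) 1
        (fun e => by
          rw [Real.norm_eq_abs, abs_le]
          refine ⟨le_trans (by norm_num) (le_min (by positivity) zero_le_one), min_le_right _ _⟩)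
      with hgdef
    have hgapp : ∀ e, g e = min (|e| / δ) 1 := fun e => rfl
    have hg0 : g 0 = 0 := by
      rw [hgapp]; simp
    have hS : MeasurableSet {e : ℝ | δ ≤ |e|} := measurableSet_le measurable_const measurable_abs
    set hn : ℕ → ℝ := fun n => ((ν n) {e : ℝ | δ ≤ |e|}).toReal with hhndef
    have hn_nonneg : ∀ n, 0 ≤ hn n := fun n => ENNReal.toReal_nonneg
    have hn_le : ∀ n, hn n ≤ ∫ e, g e ∂(ν n) := by
      intro n
      have h1 : hn n = ∫ e, Set.indicator {e : ℝ | δ ≤ |e|} (fun _ => (1:ℝ)) e ∂(ν n) := by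
        rw [integral_indicator_const (1:ℝ) hS]; simp [hhndef, Measure.real]
      rw [h1]
      refine integral_mono ((integrable_const 1).indicator hS) (g.integrable _) fun e => ?_
      by_cases he : e ∈ {e : ℝ | δ ≤ |e|}
      · rw [Set.indicator_of_mem he, hgapp]
        exact le_min ((one_le_div hδpos).mpr he) le_rfl
      · rw [Set.indicator_of_notMem he, hgapp]
        exact le_min (by positivity) zero_le_one
    have hgν : Tendsto (fun n => ∫ e, g e ∂(ν n)) atTop (nhds 0) := by
      have h1 : (fun n => ∫ e, g e ∂(ν n)) = fun n => ∫ ω, g (εn n ω) ∂μ := by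
        funext n
        rw [hνdef]
        exact integral_map (hεn n).aemeasurable g.continuous.measurable.aestronglyMeasurable
      rw [h1, ← hg0]
      exact hε0 g
    have hn_zero : Tendsto hn atTop (nhds 0) := squeeze_zero hn_nonneg hn_le hgν
    -- the bad set in the plane
    have hBc : MeasurableSet {b : ℝ × ℝ | δ ≤ dist b (0, 0)} :=
      measurableSet_le measurable_const (measurable_dist.comp
        (measurable_id.prodMk measurable_const))
    set rn : ℕ → ℝ := fun n => ((ρ n) {b : ℝ × ℝ | δ ≤ dist b (0, 0)}).toReal with hrndef
    have hrn_le : ∀ n, rn n ≤ hn n + hn n := by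
      intro n
      have hsub : {b : ℝ × ℝ | δ ≤ dist b (0, 0)} ⊆
          ({e : ℝ | δ ≤ |e|} ×ˢ Set.univ) ∪ (Set.univ ×ˢ {e : ℝ | δ ≤ |e|}) := by
        intro b hb
        have hb' : δ ≤ dist b (0, 0) := hb
        rw [Prod.dist_eq, Real.dist_eq, Real.dist_eq, sub_zero, sub_zero] at hb'
        rcases le_max_iff.mp hb' with h | h
        · exact Or.inl ⟨h, trivial⟩
        · exact Or.inr ⟨trivial, h⟩
      have h1 : (ρ n) {b : ℝ × ℝ | δ ≤ dist b (0, 0)}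
          ≤ (ν n) {e : ℝ | δ ≤ |e|} + (ν n) {e : ℝ | δ ≤ |e|} := by
        refine le_trans (measure_mono hsub) (le_trans (measure_union_le _ _) ?_)
        rw [hρdef]
        simp only [Measure.prod_prod, measure_univ, mul_one, one_mul]
        exact le_refl _
      calc rn n ≤ ((ν n) {e : ℝ | δ ≤ |e|} + (ν n) {e : ℝ | δ ≤ |e|}).toReal :=
            ENNReal.toReal_mono (by finiteness) h1
        _ = hn n + hn n := ENNReal.toReal_add (measure_ne_top _ _) (measure_ne_top _ _)
    have hrn_zero : Tendsto rn atTop (nhds 0) := by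
      refine squeeze_zero (fun n => ENNReal.toReal_nonneg) hrn_le ?_
      simpa using hn_zero.add hn_zero
    have h2C : Tendsto (fun n => 2 * ‖f‖ * rn n) atTop (nhds 0) := by
      have := hrn_zero.const_mul (2 * ‖f‖)
      rw [mul_zero] at this
      exact this
    obtain ⟨N, hN⟩ := (Metric.tendsto_atTop.mp h2C) (ε / 2) (by positivity)
    refine ⟨N, fun n hnN => ?_⟩
    have hrn_bound : 2 * ‖f‖ * rn n < ε / 2 := by
      have := hN n hnN
      rw [Real.dist_eq, sub_zero] at this
      have h0 : 0 ≤ 2 * ‖f‖ * rn n :=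
        mul_nonneg (by positivity) ENNReal.toReal_nonneg
      rwa [abs_of_nonneg h0] at this
    have hFb : ∀ b : ℝ × ℝ, |F b| ≤ ‖f‖ := fun b => by
      rw [← Real.norm_eq_abs]; exact hFbd b
    have hest : dist (∫ b, F b ∂(ρ n)) (F (0, 0)) ≤ ε / 4 + 2 * ‖f‖ * rn n := by
      rw [Real.dist_eq]
      have h1 : ∫ b, F b ∂(ρ n) - F (0, 0) = ∫ b, (F b - F (0, 0)) ∂(ρ n) := by
        rw [integral_sub (F.integrable _) (integrable_const _), integral_const]
        simp [measure_univ]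
      rw [h1]
      calc |∫ b, (F b - F (0, 0)) ∂(ρ n)| ≤ ∫ b, |F b - F (0, 0)| ∂(ρ n) := by
            rw [← Real.norm_eq_abs]
            refine le_trans (norm_integral_le_integral_norm _) ?_
            simp [Real.norm_eq_abs]
        _ ≤ ∫ b, (ε / 4 + 2 * ‖f‖ *
              Set.indicator {b : ℝ × ℝ | δ ≤ dist b (0, 0)} (fun _ => (1:ℝ)) b) ∂(ρ n) := by
            refine integral_mono (((F.integrable _).sub (integrable_const _)).abs)
              ((integrable_const _).add
                (((integrable_const (1:ℝ)).indicator hBc).const_mul _)) fun b => ?_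
            by_cases hb : dist b (0, 0) < δ
            · have h2 := hδ' b hb
              have h3 : 0 ≤ 2 * ‖f‖ *
                  Set.indicator {b : ℝ × ℝ | δ ≤ dist b (0, 0)} (fun _ => (1:ℝ)) b :=
                mul_nonneg (by positivity) (Set.indicator_nonneg (fun _ _ => zero_le_one) b)
              linarith
            · have hb' : b ∈ {b : ℝ × ℝ | δ ≤ dist b (0, 0)} := not_lt.mp hb
              rw [Set.indicator_of_mem hb', mul_one]
              have h4 := hFb b
              have h5 := hFb (0, 0)
              have h6 : |F b - F (0, 0)| ≤ |F b| + |F (0, 0)| := abs_sub _ _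
              linarith
        _ = ε / 4 + 2 * ‖f‖ * rn n := by
            rw [integral_add (integrable_const _)
                (((integrable_const (1:ℝ)).indicator hBc).const_mul _),
              integral_const, integral_const_mul, integral_indicator_const (1:ℝ) hBc]
            simp [measure_univ, hrndef, Measure.real]
    calc dist (∫ b, F b ∂(ρ n)) (F (0, 0)) ≤ ε / 4 + 2 * ‖f‖ * rn n := hest
      _ < ε / 4 + ε / 2 := by linarith
      _ < ε := by linarith
  rw [← hF00]
  exact main.congr fun n => (key n).symm
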